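/- Reflection symmetry of FPL enumerations: for every n ≥ 1 and every link pattern π ∈ LP(n), Ψ_n(π) = Ψ_n(Vπ), where Vπ is the link pattern that pairs 2n+1−i with 2n+1−j whenever π pairs i with j. -/

import Mathlib

open scoped Classical

/-! ### Link patterns

A link pattern on `2n` cyclically ordered points is a fixed-point-free noncrossing
involution.  The point `i : ZMod (2*n)` represents the label `lbl (2*n) i ∈ {1,…,2n}`
(so label arithmetic is arithmetic in `ZMod (2*n)`). -/

instance instNeZeroTwoMul (n : ℕ) [NeZero n] : NeZero (2 * n) :=
  ⟨by have := NeZero.ne n; omega⟩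

/-- The label in `{1,…,M}` represented by a point of `ZMod M`. -/
def lbl (M : ℕ) (i : ZMod M) : ℕ := if i.val = 0 then M else i.val

/-- A fixed-point-free involution of the `2n` points on a circle which is noncrossing. -/
def IsLinkPattern (n : ℕ) (f : ZMod (2 * n) → ZMod (2 * n)) : Prop :=
  Function.Involutive f ∧ (∀ i, f i ≠ i) ∧
    ∀ i j : ZMod (2 * n), ¬ (i.val < j.val ∧ j.val < (f i).val ∧ (f i).val < (f j).val)

/-- The set `LP(n)` of link patterns on `2n` points, as a subtype. -/
abbrev LinkPattern (n : ℕ) := {f : ZMod (2 * n) → ZMod (2 * n) // IsLinkPattern n f}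

/-- Rotation `R`: `R π` pairs `i-1` with `j-1` whenever `π` pairs `i` with `j`. -/
def rotMap (M : ℕ) (f : ZMod M → ZMod M) : ZMod M → ZMod M := fun i => f (i + 1) - 1

/-- Inverse rotation `R⁻¹`. -/
def rotInvMap (M : ℕ) (f : ZMod M → ZMod M) : ZMod M → ZMod M := fun i => f (i - 1) + 1

/-- The Temperley–Lieb map `e_j` (here `j : ZMod M` represents the label `lbl M j`):
if `π` pairs `j` with `j+1` it does nothing, otherwise it re-pairs `j` with `j+1`
and `π(j)` with `π(j+1)`. -/
def eMap (M : ℕ) (j : ZMod M) (f : ZMod M → ZMod M) : ZMod M → ZMod M := fun i =>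
  if f j = j + 1 then f i
  else if i = j then j + 1
  else if i = j + 1 then j
  else if i = f j then f (j + 1)
  else if i = f (j + 1) then f j
  else f i

/-! ### The `n × n` FPL domain

Vertices are `(x,y)` with `1 ≤ x,y ≤ n`.  `SqEdge.h x y` is the horizontal edge joining
`(x,y)` and `(x+1,y)` (valid for `0 ≤ x ≤ n`, `1 ≤ y ≤ n`; `x = 0` and `x = n` give the
west/east external edges); `SqEdge.v x y` is the vertical edge joining `(x,y)` and
`(x,y+1)` (valid for `1 ≤ x ≤ n`, `0 ≤ y ≤ n`; `y = 0` and `y = n` give the south/north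
external edges).  A configuration is a map `SqEdge → Bool` (`true` = black). -/

inductive SqEdge : Type
  | h : ℕ → ℕ → SqEdge
  | v : ℕ → ℕ → SqEdge
deriving DecidableEq

/-- Validity of an edge for the `n × n` domain. -/
def validB (n : ℕ) : SqEdge → Bool
  | .h x y => decide (x ≤ n) && decide (1 ≤ y) && decide (y ≤ n)
  | .v x y => decide (1 ≤ x) && decide (x ≤ n) && decide (y ≤ n)

/-- The external edge with counterclockwise label `k ∈ {1,…,4n}`, starting from the
bottom external edge of the corner vertex `(1,1)`. -/
def extEdge (n k : ℕ) : SqEdge :=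
  if k ≤ n then .v k 0
  else if k ≤ 2 * n then .h n (k - n)
  else if k ≤ 3 * n then .v (3 * n + 1 - k) n
  else .h 0 (4 * n + 1 - k)

def IsExternal (n : ℕ) (e : SqEdge) : Prop := ∃ k, 1 ≤ k ∧ k ≤ 4 * n ∧ e = extEdge n k

/-- The west, east, south, north edges incident to the vertex `(x,y)`. -/
def wEdge (x y : ℕ) : SqEdge := .h (x - 1) y
def eEdge (x y : ℕ) : SqEdge := .h x y
def sEdge (x y : ℕ) : SqEdge := .v x (y - 1)
def nEdge (x y : ℕ) : SqEdge := .v x y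

def IncidentAt (e : SqEdge) (x y : ℕ) : Prop :=
  e = wEdge x y ∨ e = eEdge x y ∨ e = sEdge x y ∨ e = nEdge x y

def blackDeg (φ : SqEdge → Bool) (x y : ℕ) : ℕ :=
  (if φ (wEdge x y) then 1 else 0) + (if φ (eEdge x y) then 1 else 0) +
    (if φ (sEdge x y) then 1 else 0) + (if φ (nEdge x y) then 1 else 0)

/-- A fully-packed loop configuration on the `n × n` domain: it is supported on the
valid edges, and every vertex is incident to exactly two black (and two white) edges. -/
def IsFpl (n : ℕ) (φ : SqEdge → Bool) : Prop :=
  (∀ e, φ e = true → validB n e = true) ∧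
    ∀ x y, 1 ≤ x → x ≤ n → 1 ≤ y → y ≤ n → blackDeg φ x y = 2

/-- Alternating boundary colouring `τ₊` (external label `1` black). -/
def BPlus (n : ℕ) (φ : SqEdge → Bool) : Prop :=
  ∀ k, 1 ≤ k → k ≤ 4 * n → (φ (extEdge n k) = true ↔ k % 2 = 1)

/-- Complementary alternating boundary colouring `τ₋`. -/
def BMinus (n : ℕ) (φ : SqEdge → Bool) : Prop :=
  ∀ k, 1 ≤ k → k ≤ 4 * n → (φ (extEdge n k) = true ↔ k % 2 = 0)

/-- Two (valid) edges of colour `b` sharing an internal vertex. -/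
def adjC (n : ℕ) (b : Bool) (φ : SqEdge → Bool) (e e' : SqEdge) : Prop :=
  e ≠ e' ∧ validB n e = true ∧ validB n e' = true ∧ φ e = b ∧ φ e' = b ∧
    ∃ x y, 1 ≤ x ∧ x ≤ n ∧ 1 ≤ y ∧ y ≤ n ∧ IncidentAt e x y ∧ IncidentAt e' x y

/-- Connectivity through monochromatic paths of colour `b`. -/
def Conn (n : ℕ) (b : Bool) (φ : SqEdge → Bool) : SqEdge → SqEdge → Prop :=
  Relation.ReflTransGen (adjC n b φ)

/-- In `Fpl(n,+)` the black external edge with black label `t ∈ {1,…,2n}` has overall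
label `2t-1`.  `φ` has link pattern (matching) `g` iff for every point `i` the black
external edges with black labels `lbl i` and `lbl (g i)` are joined by a black path. -/
def RealizesP (n : ℕ) (φ : SqEdge → Bool) (g : ZMod (2 * n) → ZMod (2 * n)) : Prop :=
  ∀ i, Conn n true φ (extEdge n (2 * lbl (2 * n) i - 1)) (extEdge n (2 * lbl (2 * n) (g i) - 1))

/-- In `Fpl(n,-)` the black external edge with black label `t` has overall label `2t`
(black labelling starting from the bottom external edge of the vertex `(2,1)`). -/
def RealizesM (n : ℕ) (φ : SqEdge → Bool) (g : ZMod (2 * n) → ZMod (2 * n)) : Prop :=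
  ∀ i, Conn n true φ (extEdge n (2 * lbl (2 * n) i)) (extEdge n (2 * lbl (2 * n) (g i)))

/-- `Ψ_{n,+}(g)`: the number of FPLs in `Fpl(n,+)` with link pattern `g`. -/
noncomputable def PsiP (n : ℕ) (g : ZMod (2 * n) → ZMod (2 * n)) : ℕ :=
  Set.ncard {φ : SqEdge → Bool | IsFpl n φ ∧ BPlus n φ ∧ RealizesP n φ g}

/-- `Ψ_{n,-}(g)`: the number of FPLs in `Fpl(n,-)` with link pattern `g`. -/
noncomputable def PsiM (n : ℕ) (g : ZMod (2 * n) → ZMod (2 * n)) : ℕ :=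
  Set.ncard {φ : SqEdge → Bool | IsFpl n φ ∧ BMinus n φ ∧ RealizesM n φ g}
/-! ### Auxiliary development for the proof -/

namespace FPLRefl

/-! #### Validity basics -/

lemma validB_h {n x y : ℕ} : validB n (.h x y) = true ↔ x ≤ n ∧ 1 ≤ y ∧ y ≤ n := by
  simp [validB, and_assoc]

lemma validB_v {n x y : ℕ} : validB n (.v x y) = true ↔ 1 ≤ x ∧ x ≤ n ∧ y ≤ n := by
  simp [validB, and_assoc]

/-! #### Plaquettes -/

/-- The unique odd plaquette containing an edge. -/
def cellA : SqEdge → ℕ × ℕ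
  | .h x y => if (x + y) % 2 = 1 then (x, y) else (x, y - 1)
  | .v x y => if (x + y) % 2 = 1 then (x, y) else (x - 1, y)

/-- Membership of an edge in the plaquette with SW corner `(a,b)`. -/
def inCell (a b : ℕ) (e : SqEdge) : Prop :=
  e = .h a b ∨ e = .v (a + 1) b ∨ e = .h a (b + 1) ∨ e = .v a b

/-- A plaquette is active when it is internal and its four edges alternate in colour. -/
def activeB (n : ℕ) (φ : SqEdge → Bool) (a b : ℕ) : Bool :=
  decide (1 ≤ a) && decide (a + 1 ≤ n) && decide (1 ≤ b) && decide (b + 1 ≤ n) &&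
    (φ (.h a b) != φ (.v (a + 1) b)) && (φ (.v (a + 1) b) != φ (.h a (b + 1))) &&
    (φ (.h a (b + 1)) != φ (.v a b))

/-- Half-gyration: flip the colours of all edges of all active odd plaquettes. -/
def gyr (n : ℕ) (φ : SqEdge → Bool) (e : SqEdge) : Bool :=
  if activeB n φ (cellA e).1 (cellA e).2 then !φ e else φ e

lemma cellA_eq {a b : ℕ} (hodd : (a + b) % 2 = 1) {e : SqEdge} (he : inCell a b e) :
    cellA e = (a, b) := by
  rcases he with rfl | rfl | rfl | rfl <;> simp only [cellA]
  · rw [if_pos hodd]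
  · have hc : ¬((a + 1 + b) % 2 = 1) := by omega
    rw [if_neg hc]; simp
  · have hc : ¬((a + (b + 1)) % 2 = 1) := by omega
    rw [if_neg hc]; simp
  · rw [if_pos hodd]

lemma gyr_inCell {n : ℕ} {φ : SqEdge → Bool} {a b : ℕ} (hodd : (a + b) % 2 = 1)
    {e : SqEdge} (he : inCell a b e) :
    gyr n φ e = if activeB n φ a b then !φ e else φ e := by
  rw [gyr, cellA_eq hodd he]

lemma activeB_ranges {n : ℕ} {φ : SqEdge → Bool} {a b : ℕ} (h : activeB n φ a b = true) :
    1 ≤ a ∧ a + 1 ≤ n ∧ 1 ≤ b ∧ b + 1 ≤ n := by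
  simp only [activeB, Bool.and_eq_true, decide_eq_true_eq] at h
  exact ⟨h.1.1.1.1.1.1, h.1.1.1.1.1.2, h.1.1.1.1.2, h.1.1.1.2⟩

/-- If a flip actually happens then the plaquette is odd and owns the edge. -/
lemma cellA_spec {n : ℕ} {φ : SqEdge → Bool} {e : SqEdge}
    (h : activeB n φ (cellA e).1 (cellA e).2 = true) :
    ((cellA e).1 + (cellA e).2) % 2 = 1 ∧ inCell (cellA e).1 (cellA e).2 e := by
  obtain ⟨h1, -, h3, -⟩ := activeB_ranges h
  clear h
  rcases e with ⟨x, y⟩ | ⟨x, y⟩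
  · by_cases hp : (x + y) % 2 = 1
    · simp only [cellA, if_pos hp]
      exact ⟨hp, Or.inl rfl⟩
    · simp only [cellA, if_neg hp] at h1 h3 ⊢
      refine ⟨by omega, Or.inr (Or.inr (Or.inl ?_))⟩
      congr 1
      omega
  · by_cases hp : (x + y) % 2 = 1
    · simp only [cellA, if_pos hp]
      exact ⟨hp, Or.inr (Or.inr (Or.inr rfl))⟩
    · simp only [cellA, if_neg hp] at h1 h3 ⊢
      refine ⟨by omega, Or.inr (Or.inl ?_)⟩
      congr 1
      omega

private lemma bne_not_not (x y : Bool) : ((!x) != (!y)) = (x != y) := by cases x <;> cases y <;> rfl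

lemma activeB_gyr {n : ℕ} {φ : SqEdge → Bool} {a b : ℕ} (hodd : (a + b) % 2 = 1) :
    activeB n (gyr n φ) a b = activeB n φ a b := by
  by_cases hact : activeB n φ a b = true
  · have e0 : gyr n φ (.h a b) = !φ (.h a b) := by
      rw [gyr_inCell hodd (Or.inl rfl), if_pos hact]
    have e1 : gyr n φ (.v (a+1) b) = !φ (.v (a+1) b) := by
      rw [gyr_inCell hodd (Or.inr (Or.inl rfl)), if_pos hact]
    have e2 : gyr n φ (.h a (b+1)) = !φ (.h a (b+1)) := by
      rw [gyr_inCell hodd (Or.inr (Or.inr (Or.inl rfl))), if_pos hact]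
    have e3 : gyr n φ (.v a b) = !φ (.v a b) := by
      rw [gyr_inCell hodd (Or.inr (Or.inr (Or.inr rfl))), if_pos hact]
    simp only [activeB, e0, e1, e2, e3, bne_not_not]
  · have hact' := eq_false_of_ne_true hact
    have e0 : gyr n φ (.h a b) = φ (.h a b) := by
      rw [gyr_inCell hodd (Or.inl rfl), hact', if_neg (by simp)]
    have e1 : gyr n φ (.v (a+1) b) = φ (.v (a+1) b) := by
      rw [gyr_inCell hodd (Or.inr (Or.inl rfl)), hact', if_neg (by simp)]
    have e2 : gyr n φ (.h a (b+1)) = φ (.h a (b+1)) := by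
      rw [gyr_inCell hodd (Or.inr (Or.inr (Or.inl rfl))), hact', if_neg (by simp)]
    have e3 : gyr n φ (.v a b) = φ (.v a b) := by
      rw [gyr_inCell hodd (Or.inr (Or.inr (Or.inr rfl))), hact', if_neg (by simp)]
    simp only [activeB, e0, e1, e2, e3]

lemma gyr_gyr {n : ℕ} (φ : SqEdge → Bool) (e : SqEdge) : gyr n (gyr n φ) e = φ e := by
  by_cases h : activeB n φ (cellA e).1 (cellA e).2 = true
  · have hodd := (cellA_spec h).1
    rw [gyr, activeB_gyr hodd, h, if_pos rfl, gyr, h, if_pos rfl, Bool.not_not]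
  · rw [gyr]
    by_cases h2 : activeB n (gyr n φ) (cellA e).1 (cellA e).2 = true
    · have hodd := (cellA_spec h2).1
      rw [activeB_gyr hodd] at h2
      exact absurd h2 h
    · rw [if_neg h2, gyr, if_neg h]

/-- Edges of an internal plaquette are valid. -/
lemma inCell_valid {n a b : ℕ} (h1 : 1 ≤ a) (h2 : a + 1 ≤ n) (h3 : 1 ≤ b) (h4 : b + 1 ≤ n)
    {e : SqEdge} (he : inCell a b e) : validB n e = true := by
  rcases he with rfl | rfl | rfl | rfl
  · exact validB_h.mpr ⟨by omega, by omega, by omega⟩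
  · exact validB_v.mpr ⟨by omega, by omega, by omega⟩
  · exact validB_h.mpr ⟨by omega, by omega, by omega⟩
  · exact validB_v.mpr ⟨by omega, by omega, by omega⟩

lemma gyr_support {n : ℕ} {φ : SqEdge → Bool} (hφ : ∀ e, φ e = true → validB n e = true)
    (e : SqEdge) (h : gyr n φ e = true) : validB n e = true := by
  rw [gyr] at h
  split at h
  · rename_i hact
    obtain ⟨h1, h2, h3, h4⟩ := activeB_ranges hact
    exact inCell_valid h1 h2 h3 h4 (cellA_spec hact).2
  · exact hφ e h

end FPLRefl
namespace FPLRefl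

/-! #### Half-gyration preserves FPLs and the boundary colouring -/

lemma activeB_alt {n : ℕ} {φ : SqEdge → Bool} {a b : ℕ} (h : activeB n φ a b = true) :
    φ (.h a b) ≠ φ (.v (a+1) b) ∧ φ (.v (a+1) b) ≠ φ (.h a (b+1)) ∧
      φ (.h a (b+1)) ≠ φ (.v a b) := by
  simp only [activeB, Bool.and_eq_true, bne_iff_ne, ne_eq] at h
  tauto


private def cnt (u : Bool) : ℕ := if u = true then 1 else 0

private lemma qWN (w e s n : Bool) (h : w ≠ n) :
    ((if (!w) = true then 1 else 0) + (if e = true then 1 else 0) +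
      (if s = true then 1 else 0) + (if (!n) = true then 1 else 0) : ℕ) =
    (if w = true then 1 else 0) + (if e = true then 1 else 0) +
      (if s = true then 1 else 0) + (if n = true then 1 else 0) := by
  cases w <;> cases n <;> simp_all <;> omega
private lemma qES (w e s n : Bool) (h : e ≠ s) :
    ((if w = true then 1 else 0) + (if (!e) = true then 1 else 0) +
      (if (!s) = true then 1 else 0) + (if n = true then 1 else 0) : ℕ) =
    (if w = true then 1 else 0) + (if e = true then 1 else 0) +
      (if s = true then 1 else 0) + (if n = true then 1 else 0) := by
  cases e <;> cases s <;> simp_all <;> omega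
private lemma qEN (w e s n : Bool) (h : e ≠ n) :
    ((if w = true then 1 else 0) + (if (!e) = true then 1 else 0) +
      (if s = true then 1 else 0) + (if (!n) = true then 1 else 0) : ℕ) =
    (if w = true then 1 else 0) + (if e = true then 1 else 0) +
      (if s = true then 1 else 0) + (if n = true then 1 else 0) := by
  cases e <;> cases n <;> simp_all <;> omega
private lemma qWS (w e s n : Bool) (h : w ≠ s) :
    ((if (!w) = true then 1 else 0) + (if e = true then 1 else 0) +
      (if (!s) = true then 1 else 0) + (if n = true then 1 else 0) : ℕ) =
    (if w = true then 1 else 0) + (if e = true then 1 else 0) +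
      (if s = true then 1 else 0) + (if n = true then 1 else 0) := by
  cases w <;> cases s <;> simp_all <;> omega
private lemma qALL (w e s n : Bool) (h1 : w ≠ n) (h2 : e ≠ s) :
    ((if (!w) = true then 1 else 0) + (if (!e) = true then 1 else 0) +
      (if (!s) = true then 1 else 0) + (if (!n) = true then 1 else 0) : ℕ) =
    (if w = true then 1 else 0) + (if e = true then 1 else 0) +
      (if s = true then 1 else 0) + (if n = true then 1 else 0) := by
  cases w <;> cases n <;> cases e <;> cases s <;> simp_all <;> omega <;> omega
private lemma qALL' (w e s n : Bool) (h1 : e ≠ n) (h2 : w ≠ s) :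
    ((if (!w) = true then 1 else 0) + (if (!e) = true then 1 else 0) +
      (if (!s) = true then 1 else 0) + (if (!n) = true then 1 else 0) : ℕ) =
    (if w = true then 1 else 0) + (if e = true then 1 else 0) +
      (if s = true then 1 else 0) + (if n = true then 1 else 0) := by
  cases e <;> cases n <;> cases w <;> cases s <;> simp_all <;> omega <;> omega

lemma blackDeg_gyr {n : ℕ} {φ : SqEdge → Bool} {x y : ℕ}
    (hx1 : 1 ≤ x) (hx2 : x ≤ n) (hy1 : 1 ≤ y) (hy2 : y ≤ n) :
    blackDeg (gyr n φ) x y = blackDeg φ x y := by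
  rcases Nat.mod_two_eq_zero_or_one (x + y) with hp | hp
  · -- even vertex: cells (x, y-1) ∋ {E,S} and (x-1, y) ∋ {W,N}
    have hodd1 : (x + (y - 1)) % 2 = 1 := by omega
    have hodd2 : ((x - 1) + y) % 2 = 1 := by omega
    have hE : inCell x (y - 1) (.h x y) := by
      right; right; left; congr 1; omega
    have hS : inCell x (y - 1) (.v x (y - 1)) := by
      right; right; right; rfl
    have hW : inCell (x - 1) y (.h (x - 1) y) := by
      left; rfl
    have hN : inCell (x - 1) y (.v x y) := by
      right; left; congr 1; omega
    have gE := gyr_inCell (n := n) (φ := φ) hodd1 hE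
    have gS := gyr_inCell (n := n) (φ := φ) hodd1 hS
    have gW := gyr_inCell (n := n) (φ := φ) hodd2 hW
    have gN := gyr_inCell (n := n) (φ := φ) hodd2 hN
    have hA1 : activeB n φ x (y - 1) = true →
        φ (.h x y) ≠ φ (.v x (y - 1)) := by
      intro h
      obtain ⟨u1, u2, u3⟩ := activeB_alt h
      have e1 : (.h x ((y - 1) + 1) : SqEdge) = .h x y := by congr 1; omega
      rw [e1] at u2 u3
      intro hc
      cases hv : φ (.v (x + 1) (y - 1)) <;> cases hb : φ (.h x (y-1)) <;>
        simp_all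
    have hA2 : activeB n φ (x - 1) y = true →
        φ (.h (x - 1) y) ≠ φ (.v x y) := by
      intro h
      obtain ⟨u1, u2, u3⟩ := activeB_alt h
      have e1 : (.v ((x - 1) + 1) y : SqEdge) = .v x y := by congr 1; omega
      rw [e1] at u1 u2
      intro hc
      cases hv : φ (.h (x-1) (y+1)) <;> cases hb : φ (.h (x-1) y) <;>
        simp_all
    simp only [blackDeg, wEdge, eEdge, sEdge, nEdge, gE, gS, gW, gN]
    cases hA : activeB n φ x (y - 1) <;> cases hB : activeB n φ (x - 1) y <;>
      simp only [Bool.false_eq_true, if_false, eq_self_iff_true, if_true]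
    · rfl
    · exact qWN _ _ _ _ (hA2 hB)
    · exact qES _ _ _ _ (hA1 hA)
    · exact qALL _ _ _ _ (hA2 hB) (hA1 hA)
  · -- odd vertex: cells (x, y) ∋ {E,N} and (x-1, y-1) ∋ {W,S}
    have hodd1 : (x + y) % 2 = 1 := hp
    have hodd2 : ((x - 1) + (y - 1)) % 2 = 1 := by omega
    have hE : inCell x y (.h x y) := Or.inl rfl
    have hN : inCell x y (.v x y) := Or.inr (Or.inr (Or.inr rfl))
    have hW : inCell (x - 1) (y - 1) (.h (x - 1) y) := by
      right; right; left; congr 1; omega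
    have hS : inCell (x - 1) (y - 1) (.v x (y - 1)) := by
      right; left; congr 1; omega
    have gE := gyr_inCell (n := n) (φ := φ) hodd1 hE
    have gN := gyr_inCell (n := n) (φ := φ) hodd1 hN
    have gW := gyr_inCell (n := n) (φ := φ) hodd2 hW
    have gS := gyr_inCell (n := n) (φ := φ) hodd2 hS
    have hA1 : activeB n φ x y = true → φ (.h x y) ≠ φ (.v x y) := by
      intro h
      obtain ⟨u1, u2, u3⟩ := activeB_alt h
      intro hc
      cases hv : φ (.v (x + 1) y) <;> cases hb : φ (.h x (y+1)) <;> simp_all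
    have hA2 : activeB n φ (x - 1) (y - 1) = true →
        φ (.h (x - 1) y) ≠ φ (.v x (y - 1)) := by
      intro h
      obtain ⟨u1, u2, u3⟩ := activeB_alt h
      have e1 : (.h (x - 1) ((y - 1) + 1) : SqEdge) = .h (x - 1) y := by congr 1; omega
      have e2 : (.v ((x - 1) + 1) (y - 1) : SqEdge) = .v x (y - 1) := by congr 1; omega
      rw [e1] at u2 u3
      rw [e2] at u1 u2
      intro hc
      cases hv : φ (.h (x-1) (y-1)) <;> cases hb : φ (.v (x-1) (y-1)) <;> simp_all
    simp only [blackDeg, wEdge, eEdge, sEdge, nEdge, gE, gS, gW, gN]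
    cases hA : activeB n φ x y <;> cases hB : activeB n φ (x - 1) (y - 1) <;>
      simp only [Bool.false_eq_true, if_false, eq_self_iff_true, if_true]
    · rfl
    · exact qWS _ _ _ _ (hA2 hB)
    · exact qEN _ _ _ _ (hA1 hA)
    · exact qALL' _ _ _ _ (hA1 hA) (hA2 hB)

lemma gyr_IsFpl {n : ℕ} {φ : SqEdge → Bool} (hF : IsFpl n φ) : IsFpl n (gyr n φ) := by
  refine ⟨gyr_support hF.1, fun x y hx1 hx2 hy1 hy2 => ?_⟩
  rw [blackDeg_gyr hx1 hx2 hy1 hy2]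
  exact hF.2 x y hx1 hx2 hy1 hy2

/-! #### External edges -/

lemma extEdge_bot {n k : ℕ} (h2 : k ≤ n) : extEdge n k = .v k 0 := by
  rw [extEdge, if_pos h2]

lemma extEdge_east {n k : ℕ} (h1 : n < k) (h2 : k ≤ 2*n) : extEdge n k = .h n (k - n) := by
  rw [extEdge, if_neg (by omega), if_pos h2]

lemma extEdge_north {n k : ℕ} (h1 : 2*n < k) (h2 : k ≤ 3*n) :
    extEdge n k = .v (3*n+1-k) n := by
  rw [extEdge, if_neg (by omega), if_neg (by omega), if_pos h2]

lemma extEdge_west {n k : ℕ} (h1 : 3*n < k) : extEdge n k = .h 0 (4*n+1-k) := by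
  rw [extEdge, if_neg (by omega), if_neg (by omega), if_neg (by omega)]

lemma validB_ext {n k : ℕ} (hn : 1 ≤ n) (h1 : 1 ≤ k) (h2 : k ≤ 4*n) :
    validB n (extEdge n k) = true := by
  rcases le_or_gt k n with h | h
  · rw [extEdge_bot h]; exact validB_v.mpr ⟨h1, h, by omega⟩
  rcases le_or_gt k (2*n) with h' | h'
  · rw [extEdge_east h h']; exact validB_h.mpr ⟨le_rfl, by omega, by omega⟩
  rcases le_or_gt k (3*n) with h'' | h''
  · rw [extEdge_north h' h'']; exact validB_v.mpr ⟨by omega, by omega, le_rfl⟩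
  · rw [extEdge_west h'']; exact validB_h.mpr ⟨by omega, by omega, by omega⟩

lemma ext_inactive {n k : ℕ} (φ : SqEdge → Bool) (h1 : 1 ≤ k) (h2 : k ≤ 4*n) :
    activeB n φ (cellA (extEdge n k)).1 (cellA (extEdge n k)).2 = false := by
  apply eq_false_of_ne_true
  intro h
  have hr := activeB_ranges h
  rcases le_or_gt k n with hc | hc
  · rw [extEdge_bot hc] at hr
    simp only [cellA] at hr; split at hr <;> simp only at hr <;> omega
  rcases le_or_gt k (2*n) with hc' | hc'
  · rw [extEdge_east hc hc'] at hr
    simp only [cellA] at hr; split at hr <;> simp only at hr <;> omega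
  rcases le_or_gt k (3*n) with hc'' | hc''
  · rw [extEdge_north hc' hc''] at hr
    simp only [cellA] at hr; split at hr <;> simp only at hr <;> omega
  · rw [extEdge_west hc''] at hr
    simp only [cellA] at hr; split at hr <;> simp only at hr <;> omega

lemma gyr_ext {n k : ℕ} (φ : SqEdge → Bool) (h1 : 1 ≤ k) (h2 : k ≤ 4*n) :
    gyr n φ (extEdge n k) = φ (extEdge n k) := by
  rw [gyr, ext_inactive φ h1 h2]
  simp

lemma gyr_BPlus {n : ℕ} {φ : SqEdge → Bool} (hB : BPlus n φ) : BPlus n (gyr n φ) := by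
  intro k hk1 hk2
  rw [gyr_ext φ hk1 hk2]
  exact hB k hk1 hk2

end FPLRefl
namespace FPLRefl

/-! #### Connectivity helpers -/

lemma adjC_symm {n : ℕ} {b : Bool} {φ : SqEdge → Bool} {e e' : SqEdge}
    (h : adjC n b φ e e') : adjC n b φ e' e := by
  obtain ⟨hne, hv, hv', hc, hc', x, y, h1, h2, h3, h4, hi, hi'⟩ := h
  exact ⟨hne.symm, hv', hv, hc', hc, x, y, h1, h2, h3, h4, hi', hi⟩

lemma conn_symm {n : ℕ} {b : Bool} {φ : SqEdge → Bool} {e e' : SqEdge}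
    (h : Conn n b φ e e') : Conn n b φ e' e := by
  induction h with
  | refl => exact Relation.ReflTransGen.refl
  | tail _ h2 ih => exact (Relation.ReflTransGen.single (adjC_symm h2)).trans ih

lemma conn_single {n : ℕ} {b : Bool} {φ : SqEdge → Bool} {e e' : SqEdge}
    (h : adjC n b φ e e') : Conn n b φ e e' := Relation.ReflTransGen.single h

/-! #### Boundary colours -/

lemma BPlus_black {n : ℕ} {ψ : SqEdge → Bool} (hB : BPlus n ψ) {k : ℕ}
    (h1 : 1 ≤ k) (h2 : k ≤ 4*n) (ho : k % 2 = 1) : ψ (extEdge n k) = true :=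
  (hB k h1 h2).mpr ho

lemma BPlus_white {n : ℕ} {ψ : SqEdge → Bool} (hB : BPlus n ψ) {k : ℕ}
    (h1 : 1 ≤ k) (h2 : k ≤ 4*n) (ho : k % 2 = 0) : ψ (extEdge n k) = false := by
  cases h : ψ (extEdge n k)
  · rfl
  · have := (hB k h1 h2).mp h
    omega

/-! #### Adjacency along the sides of a plaquette -/

section CellAdj

variable {n : ℕ} {ψ : SqEdge → Bool} {a b : ℕ}

lemma adj01 (hv0 : validB n (.h a b) = true) (hv1 : validB n (.v (a+1) b) = true)
    (hc0 : ψ (.h a b) = false) (hc1 : ψ (.v (a+1) b) = false) :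
    adjC n false ψ (.h a b) (.v (a+1) b) := by
  obtain ⟨g1, g2, g3⟩ := validB_h.mp hv0
  obtain ⟨f1, f2, f3⟩ := validB_v.mp hv1
  refine ⟨by simp, hv0, hv1, hc0, hc1, a+1, b, by omega, f2, g2, g3, ?_, ?_⟩
  · left; simp only [wEdge]; congr 1 <;> omega
  · right; right; right; rfl

lemma adj12 (hv1 : validB n (.v (a+1) b) = true) (hv2 : validB n (.h a (b+1)) = true)
    (hc1 : ψ (.v (a+1) b) = false) (hc2 : ψ (.h a (b+1)) = false) :
    adjC n false ψ (.v (a+1) b) (.h a (b+1)) := by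
  obtain ⟨f1, f2, f3⟩ := validB_v.mp hv1
  obtain ⟨g1, g2, g3⟩ := validB_h.mp hv2
  refine ⟨by simp, hv1, hv2, hc1, hc2, a+1, b+1, by omega, f2, by omega, g3, ?_, ?_⟩
  · right; right; left; simp only [sEdge]; congr 1 <;> omega
  · left; simp only [wEdge]; congr 1 <;> omega

lemma adj23 (hv2 : validB n (.h a (b+1)) = true) (hv3 : validB n (.v a b) = true)
    (hc2 : ψ (.h a (b+1)) = false) (hc3 : ψ (.v a b) = false) :
    adjC n false ψ (.h a (b+1)) (.v a b) := by
  obtain ⟨g1, g2, g3⟩ := validB_h.mp hv2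
  obtain ⟨f1, f2, f3⟩ := validB_v.mp hv3
  refine ⟨by simp, hv2, hv3, hc2, hc3, a, b+1, f1, f2, by omega, g3, ?_, ?_⟩
  · right; left; rfl
  · right; right; left; simp only [sEdge]; congr 1 <;> omega

lemma adj30 (hv3 : validB n (.v a b) = true) (hv0 : validB n (.h a b) = true)
    (hc3 : ψ (.v a b) = false) (hc0 : ψ (.h a b) = false) :
    adjC n false ψ (.v a b) (.h a b) := by
  obtain ⟨f1, f2, f3⟩ := validB_v.mp hv3
  obtain ⟨g1, g2, g3⟩ := validB_h.mp hv0
  refine ⟨by simp, hv3, hv0, hc3, hc0, a, b, f1, f2, g2, g3, ?_, ?_⟩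
  · right; right; right; rfl
  · right; left; rfl

/-! #### Middle edges for opposite pairs -/

lemma mid02 (hn : 1 ≤ n) (hB : BPlus n ψ) (hodd : (a + b) % 2 = 1)
    (hina : activeB n ψ a b = false)
    (hv0 : validB n (.h a b) = true) (hv2 : validB n (.h a (b+1)) = true)
    (hc0 : ψ (.h a b) = false) (hc2 : ψ (.h a (b+1)) = false) :
    (validB n (.v (a+1) b) = true ∧ ψ (.v (a+1) b) = false) ∨
      (validB n (.v a b) = true ∧ ψ (.v a b) = false) := by
  obtain ⟨k1, k2, k3⟩ := validB_h.mp hv0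
  obtain ⟨l1, l2, l3⟩ := validB_h.mp hv2
  by_cases hv1 : validB n (.v (a+1) b) = true
  · by_cases hc1 : ψ (.v (a+1) b) = false
    · exact Or.inl ⟨hv1, hc1⟩
    · by_cases hv3 : validB n (.v a b) = true
      · by_cases hc3 : ψ (.v a b) = false
        · exact Or.inr ⟨hv3, hc3⟩
        · exfalso
          have h1 : ψ (.v (a+1) b) = true := by
            cases h : ψ (.v (a+1) b)
            · exact absurd h hc1
            · rfl
          have h3 : ψ (.v a b) = true := by
            cases h : ψ (.v a b)
            · exact absurd h hc3
            · rfl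
          have r1 : 1 ≤ a := (validB_v.mp hv3).1
          have r2 : a + 1 ≤ n := (validB_v.mp hv1).2.1
          have : activeB n ψ a b = true := by
            simp only [activeB, hc0, hc2, h1, h3]
            simp [r1, r2, k2, l3]
          rw [this] at hina
          exact absurd hina (by simp)
      · exfalso
        have ha0 : a = 0 := by
          have : ¬(1 ≤ a ∧ a ≤ n ∧ b ≤ n) := fun hh => hv3 (validB_v.mpr hh)
          omega
        have he2 : (.h a (b+1) : SqEdge) = extEdge n (4*n - b) := by
          rw [ha0]
          rw [extEdge_west (n := n) (k := 4*n - b) (by omega)]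
          congr 1
          omega
        have : ψ (.h a (b+1)) = true := by
          rw [he2]
          exact BPlus_black (k := 4*n - b) hB (by omega) (by omega) (by omega)
        rw [this] at hc2
        exact absurd hc2 (by simp)
  · exfalso
    have han : a = n := by
      have : ¬(1 ≤ a + 1 ∧ a + 1 ≤ n ∧ b ≤ n) := fun hh => hv1 (validB_v.mpr hh)
      omega
    have he0 : (.h a b : SqEdge) = extEdge n (n + b) := by
      rw [han, extEdge_east (n := n) (k := n + b) (by omega) (by omega)]
      congr 1
      omega
    have : ψ (.h a b) = true := by
      rw [he0]
      exact BPlus_black (k := n + b) hB (by omega) (by omega) (by omega)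
    rw [this] at hc0
    exact absurd hc0 (by simp)

lemma mid13 (hn : 1 ≤ n) (hB : BPlus n ψ) (hodd : (a + b) % 2 = 1)
    (hina : activeB n ψ a b = false)
    (hv1 : validB n (.v (a+1) b) = true) (hv3 : validB n (.v a b) = true)
    (hc1 : ψ (.v (a+1) b) = false) (hc3 : ψ (.v a b) = false) :
    (validB n (.h a b) = true ∧ ψ (.h a b) = false) ∨
      (validB n (.h a (b+1)) = true ∧ ψ (.h a (b+1)) = false) := by
  obtain ⟨k1, k2, k3⟩ := validB_v.mp hv1
  obtain ⟨l1, l2, l3⟩ := validB_v.mp hv3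
  by_cases hv0 : validB n (.h a b) = true
  · by_cases hc0 : ψ (.h a b) = false
    · exact Or.inl ⟨hv0, hc0⟩
    · by_cases hv2 : validB n (.h a (b+1)) = true
      · by_cases hc2 : ψ (.h a (b+1)) = false
        · exact Or.inr ⟨hv2, hc2⟩
        · exfalso
          have h0 : ψ (.h a b) = true := by
            cases h : ψ (.h a b)
            · exact absurd h hc0
            · rfl
          have h2 : ψ (.h a (b+1)) = true := by
            cases h : ψ (.h a (b+1))
            · exact absurd h hc2
            · rfl
          have r1 : 1 ≤ b := (validB_h.mp hv0).2.1
          have r2 : b + 1 ≤ n := (validB_h.mp hv2).2.2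
          have : activeB n ψ a b = true := by
            simp only [activeB, hc1, hc3, h0, h2]
            simp [l1, k2, r1, r2]
          rw [this] at hina
          exact absurd hina (by simp)
      · exfalso
        have hbn : b = n := by
          have : ¬(a ≤ n ∧ 1 ≤ b + 1 ∧ b + 1 ≤ n) := fun hh => hv2 (validB_h.mpr hh)
          omega
        have he1 : (.v (a+1) b : SqEdge) = extEdge n (3*n - a) := by
          rw [hbn, extEdge_north (n := n) (k := 3*n - a) (by omega) (by omega)]
          congr 1 <;> omega
        have : ψ (.v (a+1) b) = true := by
          rw [he1]
          exact BPlus_black (k := 3*n - a) hB (by omega) (by omega) (by omega)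
        rw [this] at hc1
        exact absurd hc1 (by simp)
  · exfalso
    have hb0 : b = 0 := by
      have : ¬(a ≤ n ∧ 1 ≤ b ∧ b ≤ n) := fun hh => hv0 (validB_h.mpr hh)
      omega
    have he3 : (.v a b : SqEdge) = extEdge n a := by
      rw [hb0, extEdge_bot (n := n) (k := a) (by omega)]
    have : ψ (.v a b) = true := by
      rw [he3]
      exact BPlus_black (k := a) hB (by omega) (by omega) (by omega)
    rw [this] at hc3
    exact absurd hc3 (by simp)

/-- All white valid edges of an inactive odd plaquette are mutually white-connected. -/
lemma cell_conn (hn : 1 ≤ n) (hB : BPlus n ψ) (hodd : (a + b) % 2 = 1)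
    (hina : activeB n ψ a b = false) {w w' : SqEdge}
    (hw : inCell a b w) (hw' : inCell a b w')
    (hvw : validB n w = true) (hvw' : validB n w' = true)
    (hcw : ψ w = false) (hcw' : ψ w' = false) :
    Conn n false ψ w w' := by
  rcases hw with rfl | rfl | rfl | rfl <;> rcases hw' with rfl | rfl | rfl | rfl
  · exact Relation.ReflTransGen.refl
  · exact conn_single (adj01 hvw hvw' hcw hcw')
  · rcases mid02 hn hB hodd hina hvw hvw' hcw hcw' with ⟨mv, mc⟩ | ⟨mv, mc⟩
    · exact (conn_single (adj01 hvw mv hcw mc)).trans (conn_single (adj12 mv hvw' mc hcw'))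
    · exact (conn_single (adjC_symm (adj30 mv hvw mc hcw))).trans
        (conn_single (adjC_symm (adj23 hvw' mv hcw' mc)))
  · exact conn_single (adjC_symm (adj30 hvw' hvw hcw' hcw))
  · exact conn_single (adjC_symm (adj01 hvw' hvw hcw' hcw))
  · exact Relation.ReflTransGen.refl
  · exact conn_single (adj12 hvw hvw' hcw hcw')
  · rcases mid13 hn hB hodd hina hvw hvw' hcw hcw' with ⟨mv, mc⟩ | ⟨mv, mc⟩
    · exact (conn_single (adjC_symm (adj01 mv hvw mc hcw))).trans
        (conn_single (adjC_symm (adj30 hvw' mv hcw' mc)))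
    · exact (conn_single (adj12 hvw mv hcw mc)).trans (conn_single (adj23 mv hvw' mc hcw'))
  · rcases mid02 hn hB hodd hina hvw' hvw hcw' hcw with ⟨mv, mc⟩ | ⟨mv, mc⟩
    · exact (conn_single (adjC_symm (adj12 mv hvw mc hcw))).trans
        (conn_single (adjC_symm (adj01 hvw' mv hcw' mc)))
    · exact (conn_single (adj23 hvw mv hcw mc)).trans (conn_single (adj30 mv hvw' mc hcw'))
  · exact conn_single (adjC_symm (adj12 hvw' hvw hcw' hcw))
  · exact Relation.ReflTransGen.refl
  · exact conn_single (adj23 hvw hvw' hcw hcw')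
  · exact conn_single (adj30 hvw hvw' hcw hcw')
  · rcases mid13 hn hB hodd hina hvw' hvw hcw' hcw with ⟨mv, mc⟩ | ⟨mv, mc⟩
    · exact (conn_single (adj30 hvw mv hcw mc)).trans (conn_single (adj01 mv hvw' mc hcw'))
    · exact (conn_single (adjC_symm (adj23 mv hvw mc hcw))).trans
        (conn_single (adjC_symm (adj12 hvw' mv hcw' mc)))
  · exact conn_single (adjC_symm (adj23 hvw' hvw hcw' hcw))
  · exact Relation.ReflTransGen.refl

end CellAdj

end FPLRefl
namespace FPLRefl

/-! #### The invariant: good white witnesses for a black edge -/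

/-- `good n φ z w`: `w` is a legitimate white shadow (in `gyr n φ`) of the black edge `z`. -/
def good (n : ℕ) (φ : SqEdge → Bool) (z w : SqEdge) : Prop :=
  (activeB n φ (cellA z).1 (cellA z).2 = true ∧ w = z) ∨
    (activeB n φ (cellA z).1 (cellA z).2 = false ∧ inCell (cellA z).1 (cellA z).2 w ∧
      validB n w = true ∧ gyr n φ w = false)

variable {n : ℕ} {φ : SqEdge → Bool}

lemma good_pos {a b : ℕ} {z w : SqEdge} (ho : (a + b) % 2 = 1) (hz : inCell a b z)
    (A : activeB n φ a b = true) : good n φ z w ↔ w = z := by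
  unfold good
  rw [cellA_eq ho hz]
  simp [A]

lemma good_neg {a b : ℕ} {z w : SqEdge} (ho : (a + b) % 2 = 1) (hz : inCell a b z)
    (A : activeB n φ a b = false) :
    good n φ z w ↔ inCell a b w ∧ validB n w = true ∧ gyr n φ w = false := by
  unfold good
  rw [cellA_eq ho hz]
  simp [A]

/-- The colour of a flipped edge in the half-gyrated configuration. -/
lemma gyr_white_of_active {a b : ℕ} {z : SqEdge} (ho : (a + b) % 2 = 1)
    (hz : inCell a b z) (A : activeB n φ a b = true) (hc : φ z = true) :
    gyr n φ z = false := by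
  rw [gyr_inCell ho hz, if_pos A, hc]
  rfl

lemma gyr_white_of_inactive {a b : ℕ} {z : SqEdge} (ho : (a + b) % 2 = 1)
    (hz : inCell a b z) (A : activeB n φ a b = false) (hc : φ z = false) :
    gyr n φ z = false := by
  rw [gyr_inCell ho hz, A]
  simpa using hc

/-! #### The two local moves of the invariant -/

lemma step_same (hn : 1 ≤ n) {a b x y : ℕ} {e1 e2 w₀ : SqEdge}
    (ho : (a + b) % 2 = 1) (he1 : inCell a b e1) (he2 : inCell a b e2)
    (hve1 : validB n e1 = true) (hve2 : validB n e2 = true)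
    (hce1 : φ e1 = true) (hce2 : φ e2 = true) (hne : e1 ≠ e2)
    (hx1 : 1 ≤ x) (hx2 : x ≤ n) (hy1 : 1 ≤ y) (hy2 : y ≤ n)
    (hIe1 : IncidentAt e1 x y) (hIe2 : IncidentAt e2 x y)
    (hInv : ∀ w, good n φ e1 w → Conn n false (gyr n φ) w₀ w) :
    ∀ w, good n φ e2 w → Conn n false (gyr n φ) w₀ w := by
  intro w hw
  by_cases A : activeB n φ a b = true
  · rw [good_pos ho he2 A] at hw
    subst hw
    have h1 : Conn n false (gyr n φ) w₀ e1 := hInv e1 ((good_pos ho he1 A).mpr rfl)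
    refine h1.tail ⟨hne, hve1, hve2, ?_, ?_, x, y, hx1, hx2, hy1, hy2, hIe1, hIe2⟩
    · exact gyr_white_of_active ho he1 A hce1
    · exact gyr_white_of_active ho he2 A hce2
  · have A' := eq_false_of_ne_true A
    rw [good_neg ho he2 A'] at hw
    exact hInv w ((good_neg ho he1 A').mpr hw)

lemma step_diag (hn : 1 ≤ n) (hB : BPlus n φ) {a1 b1 a2 b2 x y : ℕ}
    {e1 e2 f1 f2 w₀ : SqEdge}
    (ho1 : (a1 + b1) % 2 = 1) (ho2 : (a2 + b2) % 2 = 1)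
    (he1 : inCell a1 b1 e1) (hf1 : inCell a1 b1 f1)
    (he2 : inCell a2 b2 e2) (hf2 : inCell a2 b2 f2)
    (hve1 : validB n e1 = true) (hve2 : validB n e2 = true)
    (hvf1 : validB n f1 = true) (hvf2 : validB n f2 = true)
    (hce1 : φ e1 = true) (hce2 : φ e2 = true)
    (hcf1 : φ f1 = false) (hcf2 : φ f2 = false)
    (hne12 : e1 ≠ e2) (hne1f2 : e1 ≠ f2) (hnf1e2 : f1 ≠ e2) (hnf1f2 : f1 ≠ f2)
    (hx1 : 1 ≤ x) (hx2 : x ≤ n) (hy1 : 1 ≤ y) (hy2 : y ≤ n)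
    (hIe1 : IncidentAt e1 x y) (hIe2 : IncidentAt e2 x y)
    (hIf1 : IncidentAt f1 x y) (hIf2 : IncidentAt f2 x y)
    (hInv : ∀ w, good n φ e1 w → Conn n false (gyr n φ) w₀ w) :
    ∀ w, good n φ e2 w → Conn n false (gyr n φ) w₀ w := by
  have hψB : BPlus n (gyr n φ) := gyr_BPlus hB
  intro w hw
  by_cases A1 : activeB n φ a1 b1 = true <;> by_cases A2 : activeB n φ a2 b2 = true
  · -- both cells flipped: direct adjacency e1 — e2
    rw [good_pos ho2 he2 A2] at hw
    subst hw
    have h1 : Conn n false (gyr n φ) w₀ e1 := hInv e1 ((good_pos ho1 he1 A1).mpr rfl)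
    exact h1.tail ⟨hne12, hve1, hve2, gyr_white_of_active ho1 he1 A1 hce1,
      gyr_white_of_active ho2 he2 A2 hce2, x, y, hx1, hx2, hy1, hy2, hIe1, hIe2⟩
  · -- cell 1 flipped, cell 2 not: go e1 — f2, then around cell 2
    have A2' := eq_false_of_ne_true A2
    rw [good_neg ho2 he2 A2'] at hw
    have h1 : Conn n false (gyr n φ) w₀ e1 := hInv e1 ((good_pos ho1 he1 A1).mpr rfl)
    have hψf2 : gyr n φ f2 = false := gyr_white_of_inactive ho2 hf2 A2' hcf2
    have h2 : Conn n false (gyr n φ) w₀ f2 :=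
      h1.tail ⟨hne1f2, hve1, hvf2, gyr_white_of_active ho1 he1 A1 hce1, hψf2,
        x, y, hx1, hx2, hy1, hy2, hIe1, hIf2⟩
    refine h2.trans (cell_conn hn hψB ho2 ?_ hf2 hw.1 hvf2 hw.2.1 hψf2 hw.2.2)
    rw [activeB_gyr ho2]
    exact A2'
  · -- cell 1 not flipped, cell 2 flipped: go f1 — e2
    have A1' := eq_false_of_ne_true A1
    rw [good_pos ho2 he2 A2] at hw
    subst hw
    have hψf1 : gyr n φ f1 = false := gyr_white_of_inactive ho1 hf1 A1' hcf1
    have h1 : Conn n false (gyr n φ) w₀ f1 :=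
      hInv f1 ((good_neg ho1 he1 A1').mpr ⟨hf1, hvf1, hψf1⟩)
    exact h1.tail ⟨hnf1e2, hvf1, hve2, hψf1, gyr_white_of_active ho2 he2 A2 hce2,
      x, y, hx1, hx2, hy1, hy2, hIf1, hIe2⟩
  · -- neither flipped: go f1 — f2, then around cell 2
    have A1' := eq_false_of_ne_true A1
    have A2' := eq_false_of_ne_true A2
    rw [good_neg ho2 he2 A2'] at hw
    have hψf1 : gyr n φ f1 = false := gyr_white_of_inactive ho1 hf1 A1' hcf1
    have hψf2 : gyr n φ f2 = false := gyr_white_of_inactive ho2 hf2 A2' hcf2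
    have h1 : Conn n false (gyr n φ) w₀ f1 :=
      hInv f1 ((good_neg ho1 he1 A1').mpr ⟨hf1, hvf1, hψf1⟩)
    have h2 : Conn n false (gyr n φ) w₀ f2 :=
      h1.tail ⟨hnf1f2, hvf1, hvf2, hψf1, hψf2, x, y, hx1, hx2, hy1, hy2, hIf1, hIf2⟩
    refine h2.trans (cell_conn hn hψB ho2 ?_ hf2 hw.1 hvf2 hw.2.1 hψf2 hw.2.2)
    rw [activeB_gyr ho2]
    exact A2'

end FPLRefl
namespace FPLRefl

/-- One step of the invariant along a black adjacency. -/
lemma step {n : ℕ} {φ : SqEdge → Bool} (hn : 1 ≤ n) (hF : IsFpl n φ) (hB : BPlus n φ)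
    {eb ec w₀ : SqEdge} (hadj : adjC n true φ eb ec)
    (hInv : ∀ w, good n φ eb w → Conn n false (gyr n φ) w₀ w) :
    ∀ w, good n φ ec w → Conn n false (gyr n φ) w₀ w := by
  obtain ⟨hne, hvb, hvc, hcb, hcc, x, y, hx1, hx2, hy1, hy2, hib, hic⟩ := hadj
  have hd := hF.2 x y hx1 hx2 hy1 hy2
  simp only [blackDeg, wEdge, eEdge, sEdge, nEdge] at hd
  simp only [IncidentAt, wEdge, eEdge, sEdge, nEdge] at hib hic
  have hIW : IncidentAt (.h (x-1) y) x y := Or.inl rfl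
  have hIE : IncidentAt (.h x y) x y := Or.inr (Or.inl rfl)
  have hIS : IncidentAt (.v x (y-1)) x y := Or.inr (Or.inr (Or.inl rfl))
  have hIN : IncidentAt (.v x y) x y := Or.inr (Or.inr (Or.inr rfl))
  have hvW : validB n (.h (x-1) y) = true := validB_h.mpr ⟨by omega, hy1, hy2⟩
  have hvE : validB n (.h x y) = true := validB_h.mpr ⟨hx2, hy1, hy2⟩
  have hvS : validB n (.v x (y-1)) = true := validB_v.mpr ⟨hx1, hx2, by omega⟩
  have hvN : validB n (.v x y) = true := validB_v.mpr ⟨hx1, hx2, hy2⟩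
  rcases Nat.mod_two_eq_zero_or_one (x + y) with hp | hp
  · -- even vertex
    have hoXV : (x + (y-1)) % 2 = 1 := by omega
    have hoUY : ((x-1) + y) % 2 = 1 := by omega
    have hEc : inCell x (y-1) (.h x y) := by right; right; left; congr 1; omega
    have hSc : inCell x (y-1) (.v x (y-1)) := Or.inr (Or.inr (Or.inr rfl))
    have hWc : inCell (x-1) y (.h (x-1) y) := Or.inl rfl
    have hNc : inCell (x-1) y (.v x y) := by right; left; congr 1; omega
    rcases hib with rfl | rfl | rfl | rfl <;> rcases hic with rfl | rfl | rfl | rfl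
    · exact absurd rfl hne
    · have hoth : φ (.v x y : SqEdge) = false ∧ φ (.v x (y-1) : SqEdge) = false := by
        simp only [hcb, hcc, if_true, eq_self_iff_true] at hd
        cases hu : φ (.v x y : SqEdge) <;> cases hz : φ (.v x (y-1) : SqEdge) <;> simp_all
      exact step_diag hn hB hoUY hoXV hWc hNc hEc hSc hvW hvE hvN hvS
        hcb hcc hoth.1 hoth.2 hne (by simp) (by simp) (by simp; omega)
        hx1 hx2 hy1 hy2 hIW hIE hIN hIS hInv
    · have hoth : φ (.v x y : SqEdge) = false ∧ φ (.h x y : SqEdge) = false := by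
        simp only [hcb, hcc, if_true, eq_self_iff_true] at hd
        cases hu : φ (.v x y : SqEdge) <;> cases hz : φ (.h x y : SqEdge) <;> simp_all
      exact step_diag hn hB hoUY hoXV hWc hNc hSc hEc hvW hvS hvN hvE
        hcb hcc hoth.1 hoth.2 hne (by simp; omega) (by simp; omega) (by simp)
        hx1 hx2 hy1 hy2 hIW hIS hIN hIE hInv
    · exact step_same hn hoUY hWc hNc hvW hvN hcb hcc hne
        hx1 hx2 hy1 hy2 hIW hIN hInv
    · have hoth : φ (.v x (y-1) : SqEdge) = false ∧ φ (.v x y : SqEdge) = false := by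
        simp only [hcb, hcc, if_true, eq_self_iff_true] at hd
        cases hu : φ (.v x (y-1) : SqEdge) <;> cases hz : φ (.v x y : SqEdge) <;> simp_all
      exact step_diag hn hB hoXV hoUY hEc hSc hWc hNc hvE hvW hvS hvN
        hcb hcc hoth.1 hoth.2 hne (by simp) (by simp) (by simp; omega)
        hx1 hx2 hy1 hy2 hIE hIW hIS hIN hInv
    · exact absurd rfl hne
    · exact step_same hn hoXV hEc hSc hvE hvS hcb hcc hne
        hx1 hx2 hy1 hy2 hIE hIS hInv
    · have hoth : φ (.v x (y-1) : SqEdge) = false ∧ φ (.h (x-1) y : SqEdge) = false := by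
        simp only [hcb, hcc, if_true, eq_self_iff_true] at hd
        cases hu : φ (.v x (y-1) : SqEdge) <;> cases hz : φ (.h (x-1) y : SqEdge) <;> simp_all
      exact step_diag hn hB hoXV hoUY hEc hSc hNc hWc hvE hvN hvS hvW
        hcb hcc hoth.1 hoth.2 hne (by simp; omega) (by simp; omega) (by simp)
        hx1 hx2 hy1 hy2 hIE hIN hIS hIW hInv
    · have hoth : φ (.h x y : SqEdge) = false ∧ φ (.v x y : SqEdge) = false := by
        simp only [hcb, hcc, if_true, eq_self_iff_true] at hd
        cases hu : φ (.h x y : SqEdge) <;> cases hz : φ (.v x y : SqEdge) <;> simp_all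
      exact step_diag hn hB hoXV hoUY hSc hEc hWc hNc hvS hvW hvE hvN
        hcb hcc hoth.1 hoth.2 hne (by simp; omega) (by simp; omega) (by simp)
        hx1 hx2 hy1 hy2 hIS hIW hIE hIN hInv
    · exact step_same hn hoXV hSc hEc hvS hvE hcb hcc hne
        hx1 hx2 hy1 hy2 hIS hIE hInv
    · exact absurd rfl hne
    · have hoth : φ (.h x y : SqEdge) = false ∧ φ (.h (x-1) y : SqEdge) = false := by
        simp only [hcb, hcc, if_true, eq_self_iff_true] at hd
        cases hu : φ (.h x y : SqEdge) <;> cases hz : φ (.h (x-1) y : SqEdge) <;> simp_all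
      exact step_diag hn hB hoXV hoUY hSc hEc hNc hWc hvS hvN hvE hvW
        hcb hcc hoth.1 hoth.2 hne (by simp) (by simp) (by simp; omega)
        hx1 hx2 hy1 hy2 hIS hIN hIE hIW hInv
    · exact step_same hn hoUY hNc hWc hvN hvW hcb hcc hne
        hx1 hx2 hy1 hy2 hIN hIW hInv
    · have hoth : φ (.h (x-1) y : SqEdge) = false ∧ φ (.v x (y-1) : SqEdge) = false := by
        simp only [hcb, hcc, if_true, eq_self_iff_true] at hd
        cases hu : φ (.h (x-1) y : SqEdge) <;> cases hz : φ (.v x (y-1) : SqEdge) <;> simp_all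
      exact step_diag hn hB hoUY hoXV hNc hWc hEc hSc hvN hvE hvW hvS
        hcb hcc hoth.1 hoth.2 hne (by simp; omega) (by simp; omega) (by simp)
        hx1 hx2 hy1 hy2 hIN hIE hIW hIS hInv
    · have hoth : φ (.h (x-1) y : SqEdge) = false ∧ φ (.h x y : SqEdge) = false := by
        simp only [hcb, hcc, if_true, eq_self_iff_true] at hd
        cases hu : φ (.h (x-1) y : SqEdge) <;> cases hz : φ (.h x y : SqEdge) <;> simp_all
      exact step_diag hn hB hoUY hoXV hNc hWc hSc hEc hvN hvS hvW hvE
        hcb hcc hoth.1 hoth.2 hne (by simp) (by simp) (by simp; omega)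
        hx1 hx2 hy1 hy2 hIN hIS hIW hIE hInv
    · exact absurd rfl hne
  · -- odd vertex
    have hoXY : (x + y) % 2 = 1 := hp
    have hoUV : ((x-1) + (y-1)) % 2 = 1 := by omega
    have hEc2 : inCell x y (.h x y) := Or.inl rfl
    have hNc2 : inCell x y (.v x y) := Or.inr (Or.inr (Or.inr rfl))
    have hWc2 : inCell (x-1) (y-1) (.h (x-1) y) := by right; right; left; congr 1; omega
    have hSc2 : inCell (x-1) (y-1) (.v x (y-1)) := by right; left; congr 1; omega
    rcases hib with rfl | rfl | rfl | rfl <;> rcases hic with rfl | rfl | rfl | rfl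
    · exact absurd rfl hne
    · have hoth : φ (.v x (y-1) : SqEdge) = false ∧ φ (.v x y : SqEdge) = false := by
        simp only [hcb, hcc, if_true, eq_self_iff_true] at hd
        cases hu : φ (.v x (y-1) : SqEdge) <;> cases hz : φ (.v x y : SqEdge) <;> simp_all
      exact step_diag hn hB hoUV hoXY hWc2 hSc2 hEc2 hNc2 hvW hvE hvS hvN
        hcb hcc hoth.1 hoth.2 hne (by simp) (by simp) (by simp; omega)
        hx1 hx2 hy1 hy2 hIW hIE hIS hIN hInv
    · exact step_same hn hoUV hWc2 hSc2 hvW hvS hcb hcc hne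
        hx1 hx2 hy1 hy2 hIW hIS hInv
    · have hoth : φ (.v x (y-1) : SqEdge) = false ∧ φ (.h x y : SqEdge) = false := by
        simp only [hcb, hcc, if_true, eq_self_iff_true] at hd
        cases hu : φ (.v x (y-1) : SqEdge) <;> cases hz : φ (.h x y : SqEdge) <;> simp_all
      exact step_diag hn hB hoUV hoXY hWc2 hSc2 hNc2 hEc2 hvW hvN hvS hvE
        hcb hcc hoth.1 hoth.2 hne (by simp; omega) (by simp; omega) (by simp)
        hx1 hx2 hy1 hy2 hIW hIN hIS hIE hInv
    · have hoth : φ (.v x y : SqEdge) = false ∧ φ (.v x (y-1) : SqEdge) = false := by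
        simp only [hcb, hcc, if_true, eq_self_iff_true] at hd
        cases hu : φ (.v x y : SqEdge) <;> cases hz : φ (.v x (y-1) : SqEdge) <;> simp_all
      exact step_diag hn hB hoXY hoUV hEc2 hNc2 hWc2 hSc2 hvE hvW hvN hvS
        hcb hcc hoth.1 hoth.2 hne (by simp) (by simp) (by simp; omega)
        hx1 hx2 hy1 hy2 hIE hIW hIN hIS hInv
    · exact absurd rfl hne
    · have hoth : φ (.v x y : SqEdge) = false ∧ φ (.h (x-1) y : SqEdge) = false := by
        simp only [hcb, hcc, if_true, eq_self_iff_true] at hd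
        cases hu : φ (.v x y : SqEdge) <;> cases hz : φ (.h (x-1) y : SqEdge) <;> simp_all
      exact step_diag hn hB hoXY hoUV hEc2 hNc2 hSc2 hWc2 hvE hvS hvN hvW
        hcb hcc hoth.1 hoth.2 hne (by simp; omega) (by simp; omega) (by simp)
        hx1 hx2 hy1 hy2 hIE hIS hIN hIW hInv
    · exact step_same hn hoXY hEc2 hNc2 hvE hvN hcb hcc hne
        hx1 hx2 hy1 hy2 hIE hIN hInv
    · exact step_same hn hoUV hSc2 hWc2 hvS hvW hcb hcc hne
        hx1 hx2 hy1 hy2 hIS hIW hInv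
    · have hoth : φ (.h (x-1) y : SqEdge) = false ∧ φ (.v x y : SqEdge) = false := by
        simp only [hcb, hcc, if_true, eq_self_iff_true] at hd
        cases hu : φ (.h (x-1) y : SqEdge) <;> cases hz : φ (.v x y : SqEdge) <;> simp_all
      exact step_diag hn hB hoUV hoXY hSc2 hWc2 hEc2 hNc2 hvS hvE hvW hvN
        hcb hcc hoth.1 hoth.2 hne (by simp; omega) (by simp; omega) (by simp)
        hx1 hx2 hy1 hy2 hIS hIE hIW hIN hInv
    · exact absurd rfl hne
    · have hoth : φ (.h (x-1) y : SqEdge) = false ∧ φ (.h x y : SqEdge) = false := by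
        simp only [hcb, hcc, if_true, eq_self_iff_true] at hd
        cases hu : φ (.h (x-1) y : SqEdge) <;> cases hz : φ (.h x y : SqEdge) <;> simp_all
      exact step_diag hn hB hoUV hoXY hSc2 hWc2 hNc2 hEc2 hvS hvN hvW hvE
        hcb hcc hoth.1 hoth.2 hne (by simp) (by simp) (by simp; omega)
        hx1 hx2 hy1 hy2 hIS hIN hIW hIE hInv
    · have hoth : φ (.h x y : SqEdge) = false ∧ φ (.v x (y-1) : SqEdge) = false := by
        simp only [hcb, hcc, if_true, eq_self_iff_true] at hd
        cases hu : φ (.h x y : SqEdge) <;> cases hz : φ (.v x (y-1) : SqEdge) <;> simp_all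
      exact step_diag hn hB hoXY hoUV hNc2 hEc2 hWc2 hSc2 hvN hvW hvE hvS
        hcb hcc hoth.1 hoth.2 hne (by simp; omega) (by simp; omega) (by simp)
        hx1 hx2 hy1 hy2 hIN hIW hIE hIS hInv
    · exact step_same hn hoXY hNc2 hEc2 hvN hvE hcb hcc hne
        hx1 hx2 hy1 hy2 hIN hIE hInv
    · have hoth : φ (.h x y : SqEdge) = false ∧ φ (.h (x-1) y : SqEdge) = false := by
        simp only [hcb, hcc, if_true, eq_self_iff_true] at hd
        cases hu : φ (.h x y : SqEdge) <;> cases hz : φ (.h (x-1) y : SqEdge) <;> simp_all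
      exact step_diag hn hB hoXY hoUV hNc2 hEc2 hSc2 hWc2 hvN hvS hvE hvW
        hcb hcc hoth.1 hoth.2 hne (by simp) (by simp) (by simp; omega)
        hx1 hx2 hy1 hy2 hIN hIS hIE hIW hInv
    · exact absurd rfl hne

end FPLRefl
namespace FPLRefl

variable {n : ℕ} {φ : SqEdge → Bool}

/-- Induction along a black chain. -/
lemma chain (hn : 1 ≤ n) (hF : IsFpl n φ) (hB : BPlus n φ) {a e w₀ : SqEdge}
    (h : Conn n true φ a e)
    (hbase : ∀ w, good n φ a w → Conn n false (gyr n φ) w₀ w) :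
    ∀ w, good n φ e w → Conn n false (gyr n φ) w₀ w := by
  induction h with
  | refl => exact hbase
  | tail h1 h2 ih => exact step hn hF hB h2 ih

/-- The odd boundary plaquette of an odd external edge contains the next external edge. -/
lemma ext_cell (hn : 1 ≤ n) {k : ℕ} (hk1 : 1 ≤ k) (hk2 : k ≤ 4*n) (hko : k % 2 = 1) :
    ∃ a b, (a + b) % 2 = 1 ∧ inCell a b (extEdge n k) ∧ inCell a b (extEdge n (k+1)) := by
  rcases le_or_gt k n with h | h
  · refine ⟨k, 0, by omega, ?_, ?_⟩
    · rw [extEdge_bot h]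
      exact Or.inr (Or.inr (Or.inr rfl))
    · rcases lt_or_eq_of_le h with h' | h'
      · rw [extEdge_bot (by omega)]
        exact Or.inr (Or.inl rfl)
      · rw [extEdge_east (by omega) (by omega)]
        right; right; left
        congr 1 <;> omega
  rcases le_or_gt k (2*n) with h2 | h2
  · refine ⟨n, k - n, by omega, ?_, ?_⟩
    · rw [extEdge_east h h2]
      exact Or.inl rfl
    · rw [extEdge_east (by omega) (by omega)]
      right; right; left
      congr 1
      omega
  rcases le_or_gt k (3*n) with h3 | h3
  · refine ⟨3*n - k, n, by omega, ?_, ?_⟩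
    · rw [extEdge_north h2 h3]
      right; left
      congr 1
      omega
    · rcases lt_or_eq_of_le h3 with h' | h'
      · rw [extEdge_north (by omega) (by omega)]
        right; right; right
        congr 1
        omega
      · rw [extEdge_west (by omega)]
        left
        congr 1 <;> omega
  · refine ⟨0, 4*n - k, by omega, ?_, ?_⟩
    · rw [extEdge_west h3]
      right; right; left
      congr 1
      omega
    · rw [extEdge_west (by omega)]
      left
      congr 1
      omega

/-- The half-gyration pattern lemma: a black path between odd external edges yields a
white path of the half-gyrated configuration between the shifted external edges. -/
lemma pat (hn : 1 ≤ n) (hF : IsFpl n φ) (hB : BPlus n φ) {k l : ℕ}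
    (hk1 : 1 ≤ k) (hk2 : k ≤ 4*n) (hko : k % 2 = 1)
    (hl1 : 1 ≤ l) (hl2 : l ≤ 4*n) (hlo : l % 2 = 1)
    (h : Conn n true φ (extEdge n k) (extEdge n l)) :
    Conn n false (gyr n φ) (extEdge n (k+1)) (extEdge n (l+1)) := by
  obtain ⟨a, b, hoab, hmk, hmk1⟩ := ext_cell hn hk1 hk2 hko
  have hkrange : k + 1 ≤ 4*n := by omega
  have hAk : activeB n φ a b = false := by
    have h' := ext_inactive (n := n) (k := k) φ hk1 hk2
    rwa [cellA_eq hoab hmk] at h'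
  have hAψk : activeB n (gyr n φ) a b = false := by
    rw [activeB_gyr hoab]; exact hAk
  have hψB : BPlus n (gyr n φ) := gyr_BPlus hB
  have hwhite : gyr n φ (extEdge n (k+1)) = false := by
    rw [gyr_ext φ (by omega) hkrange]
    exact BPlus_white hB (by omega) hkrange (by omega)
  have hvk1 : validB n (extEdge n (k+1)) = true := validB_ext hn (by omega) hkrange
  have hbase : ∀ w, good n φ (extEdge n k) w →
      Conn n false (gyr n φ) (extEdge n (k+1)) w := by
    intro w hw
    rw [good_neg hoab hmk hAk] at hw
    exact cell_conn hn hψB hoab hAψk hmk1 hw.1 hvk1 hw.2.1 hwhite hw.2.2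
  obtain ⟨a', b', hoab', hml, hml1⟩ := ext_cell hn hl1 hl2 hlo
  have hlrange : l + 1 ≤ 4*n := by omega
  have hAl : activeB n φ a' b' = false := by
    have h' := ext_inactive (n := n) (k := l) φ hl1 hl2
    rwa [cellA_eq hoab' hml] at h'
  have hgood : good n φ (extEdge n l) (extEdge n (l+1)) := by
    rw [good_neg hoab' hml hAl]
    refine ⟨hml1, validB_ext hn (by omega) hlrange, ?_⟩
    rw [gyr_ext φ (by omega) hlrange]
    exact BPlus_white hB (by omega) hlrange (by omega)
  exact chain hn hF hB h hbase _ hgood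

end FPLRefl
namespace FPLRefl

/-! #### Diagonal reflection composed with colour complementation -/

def dref : SqEdge → SqEdge
  | .h x y => .v y x
  | .v x y => .h y x

def cdMap (n : ℕ) (ψ : SqEdge → Bool) (e : SqEdge) : Bool := !ψ (dref e) && validB n e

variable {n : ℕ} {ψ : SqEdge → Bool}

@[simp] lemma dref_dref (e : SqEdge) : dref (dref e) = e := by cases e <;> rfl

lemma validB_dref {e : SqEdge} : validB n (dref e) = true ↔ validB n e = true := by
  cases e <;> simp [dref, validB_h, validB_v] <;> tauto

lemma IncidentAt_dref {e : SqEdge} {x y : ℕ} (h : IncidentAt e x y) :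
    IncidentAt (dref e) y x := by
  rcases h with h | h | h | h <;> subst h
  · exact Or.inr (Or.inr (Or.inl rfl))
  · exact Or.inr (Or.inr (Or.inr rfl))
  · exact Or.inl rfl
  · exact Or.inr (Or.inl rfl)

lemma cdMap_IsFpl (hψ : IsFpl n ψ) : IsFpl n (cdMap n ψ) := by
  constructor
  · intro e he
    rw [cdMap, Bool.and_eq_true] at he
    exact he.2
  · intro x y hx1 hx2 hy1 hy2
    have hvW : validB n (wEdge x y) = true := validB_h.mpr ⟨by omega, hy1, hy2⟩
    have hvE : validB n (eEdge x y) = true := validB_h.mpr ⟨hx2, hy1, hy2⟩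
    have hvS : validB n (sEdge x y) = true := validB_v.mpr ⟨hx1, hx2, by omega⟩
    have hvN : validB n (nEdge x y) = true := validB_v.mpr ⟨hx1, hx2, hy2⟩
    have e1 : cdMap n ψ (wEdge x y) = !ψ (sEdge y x) := by
      simp only [cdMap, wEdge, dref, sEdge]
      rw [show validB n (SqEdge.h (x-1) y) = true from hvW, Bool.and_true]
    have e2 : cdMap n ψ (eEdge x y) = !ψ (nEdge y x) := by
      simp only [cdMap, eEdge, dref, nEdge]
      rw [show validB n (SqEdge.h x y) = true from hvE, Bool.and_true]
    have e3 : cdMap n ψ (sEdge x y) = !ψ (wEdge y x) := by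
      simp only [cdMap, sEdge, dref, wEdge]
      rw [show validB n (SqEdge.v x (y-1)) = true from hvS, Bool.and_true]
    have e4 : cdMap n ψ (nEdge x y) = !ψ (eEdge y x) := by
      simp only [cdMap, nEdge, dref, eEdge]
      rw [show validB n (SqEdge.v x y) = true from hvN, Bool.and_true]
    have hd := hψ.2 y x hy1 hy2 hx1 hx2
    simp only [blackDeg, e1, e2, e3, e4] at hd ⊢
    cases h1 : ψ (wEdge y x) <;> cases h2 : ψ (eEdge y x) <;>
      cases h3 : ψ (sEdge y x) <;> cases h4 : ψ (nEdge y x) <;> simp_all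

lemma dref_ext (hn : 1 ≤ n) {k : ℕ} (h1 : 1 ≤ k) (h2 : k ≤ 4*n) :
    dref (extEdge n k) = extEdge n (4*n+1-k) := by
  rcases le_or_gt k n with h | h
  · rw [extEdge_bot h, extEdge_west (n := n) (k := 4*n+1-k) (by omega)]
    show (.h 0 k : SqEdge) = .h 0 (4*n+1-(4*n+1-k))
    congr 1
    omega
  rcases le_or_gt k (2*n) with h' | h'
  · rw [extEdge_east h h', extEdge_north (n := n) (k := 4*n+1-k) (by omega) (by omega)]
    show (.v (k-n) n : SqEdge) = .v (3*n+1-(4*n+1-k)) n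
    congr 1
    omega
  rcases le_or_gt k (3*n) with h'' | h''
  · rw [extEdge_north h' h'', extEdge_east (n := n) (k := 4*n+1-k) (by omega) (by omega)]
    show (.h n (3*n+1-k) : SqEdge) = .h n (4*n+1-k-n)
    congr 1
    omega
  · rw [extEdge_west h'', extEdge_bot (n := n) (k := 4*n+1-k) (by omega)]
    rfl

lemma cdMap_BPlus (hn : 1 ≤ n) (hψB : BPlus n ψ) : BPlus n (cdMap n ψ) := by
  intro k h1 h2
  have hd := dref_ext hn h1 h2
  have hv := validB_ext (n := n) (k := k) hn h1 h2
  have hB' := hψB (4*n+1-k) (by omega) (by omega)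
  simp only [cdMap, hd, hv, Bool.and_true]
  cases hq : ψ (extEdge n (4*n+1-k)) <;> simp_all <;> omega

lemma adjC_dref {e e' : SqEdge} (h : adjC n false ψ e e') :
    adjC n true (cdMap n ψ) (dref e) (dref e') := by
  obtain ⟨hne, hv, hv', hc, hc', x, y, b1, b2, b3, b4, hi, hi'⟩ := h
  refine ⟨?_, validB_dref.mpr hv, validB_dref.mpr hv', ?_, ?_, y, x, b3, b4, b1, b2,
    IncidentAt_dref hi, IncidentAt_dref hi'⟩
  · intro hh
    exact hne (by rw [← dref_dref e, ← dref_dref e', hh])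
  · simp [cdMap, dref_dref, hc, validB_dref.mpr hv]
  · simp [cdMap, dref_dref, hc', validB_dref.mpr hv']

lemma conn_dref {e e' : SqEdge} (h : Conn n false ψ e e') :
    Conn n true (cdMap n ψ) (dref e) (dref e') := by
  induction h with
  | refl => exact Relation.ReflTransGen.refl
  | tail h1 h2 ih => exact ih.tail (adjC_dref h2)

lemma cdMap_cdMap (hsupp : ∀ e, ψ e = true → validB n e = true) (e : SqEdge) :
    cdMap n (cdMap n ψ) e = ψ e := by
  by_cases hv : validB n e = true
  · simp [cdMap, dref_dref, hv, validB_dref.mpr hv]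
  · have h1 : ψ e = false := by
      cases h : ψ e
      · rfl
      · exact absurd (hsupp e h) hv
    have h2 : validB n e = false := eq_false_of_ne_true hv
    simp [cdMap, h1, h2]

end FPLRefl
namespace FPLRefl

variable {n : ℕ}

lemma lbl_bounds (hn : 1 ≤ n) (i : ZMod (2*n)) :
    1 ≤ lbl (2*n) i ∧ lbl (2*n) i ≤ 2*n := by
  haveI : NeZero n := ⟨by omega⟩
  have hlt : i.val < 2*n := ZMod.val_lt i
  unfold lbl
  split <;> omega

lemma lbl_one_sub (hn : 1 ≤ n) (i : ZMod (2*n)) :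
    lbl (2*n) (1 - i) = 2*n + 1 - lbl (2*n) i := by
  haveI : NeZero n := ⟨by omega⟩
  have hlt : i.val < 2*n := ZMod.val_lt i
  have hcast : ((2*n + 1 - i.val : ℕ) : ZMod (2*n)) = 1 - i := by
    rw [Nat.cast_sub (by omega)]
    have hz : ((2*n + 1 : ℕ) : ZMod (2*n)) = 1 := by
      rw [Nat.cast_add, Nat.cast_one, ZMod.natCast_self, zero_add]
    rw [hz, ZMod.natCast_val, ZMod.cast_id]
  have hval : (1 - i).val = (2*n + 1 - i.val) % (2*n) := by
    rw [← hcast, ZMod.val_natCast]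
  by_cases ht0 : i.val = 0
  · have h1 : (2*n + 1 - i.val) % (2*n) = 1 := by
      rw [ht0, Nat.sub_zero, Nat.add_mod_left, Nat.mod_eq_of_lt (by omega)]
    unfold lbl
    rw [hval, h1, if_neg (by omega), if_pos ht0]
    omega
  · by_cases ht1 : i.val = 1
    · have h1 : (2*n + 1 - i.val) % (2*n) = 0 := by
        rw [ht1]
        simp
      unfold lbl
      rw [hval, h1, if_pos rfl, if_neg ht0]
      omega
    · have h1 : (2*n + 1 - i.val) % (2*n) = 2*n + 1 - i.val :=
        Nat.mod_eq_of_lt (by omega)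
      unfold lbl
      rw [hval, h1]
      rw [if_neg (by omega), if_neg ht0]

/-! #### Finiteness -/

lemma supp_finite (n : ℕ) :
    {φ : SqEdge → Bool | ∀ e, φ e = true → validB n e = true}.Finite := by
  classical
  set F : (SqEdge → Bool) → (Fin (n+1) × Fin (n+1) × Bool → Bool) := fun φ p =>
    φ (if p.2.2 then SqEdge.v p.1.val p.2.1.val else SqEdge.h p.1.val p.2.1.val) with hF
  have hinj : Set.InjOn F {φ | ∀ e, φ e = true → validB n e = true} := by
    intro φ1 h1 φ2 h2 heq
    funext e
    by_cases hv : validB n e = true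
    · rcases e with ⟨x, y⟩ | ⟨x, y⟩
      · obtain ⟨b1, b2, b3⟩ := validB_h.mp hv
        have := congrFun heq (⟨x, by omega⟩, ⟨y, by omega⟩, false)
        simpa [hF] using this
      · obtain ⟨b1, b2, b3⟩ := validB_v.mp hv
        have := congrFun heq (⟨x, by omega⟩, ⟨y, by omega⟩, true)
        simpa [hF] using this
    · have e1 : φ1 e = false := by
        cases h : φ1 e
        · rfl
        · exact absurd (h1 e h) hv
      have e2 : φ2 e = false := by
        cases h : φ2 e
        · rfl
        · exact absurd (h2 e h) hv
      rw [e1, e2]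
  exact Set.Finite.of_finite_image (Set.toFinite _) hinj

/-! #### The bijection -/

def Tmap (n : ℕ) (φ : SqEdge → Bool) : SqEdge → Bool := cdMap n (gyr n φ)

lemma Tmap_left_inv {φ : SqEdge → Bool} (hF : IsFpl n φ) :
    gyr n (cdMap n (Tmap n φ)) = φ := by
  have h1 : cdMap n (cdMap n (gyr n φ)) = gyr n φ :=
    funext (cdMap_cdMap (gyr_support hF.1))
  funext e
  rw [Tmap, h1, gyr_gyr]

lemma Tmap_mem (hn : 1 ≤ n) {φ : SqEdge → Bool} {g : ZMod (2*n) → ZMod (2*n)}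
    (hF : IsFpl n φ) (hB : BPlus n φ) (hR : RealizesP n φ g) :
    IsFpl n (Tmap n φ) ∧ BPlus n (Tmap n φ) ∧
      RealizesP n (Tmap n φ) (fun i => 1 - g (1 - i)) := by
  have hψF := gyr_IsFpl hF
  have hψB := gyr_BPlus hB
  refine ⟨cdMap_IsFpl hψF, cdMap_BPlus hn hψB, ?_⟩
  intro j
  have hb1 := lbl_bounds hn (1 - j)
  have hb2 := lbl_bounds hn (g (1 - j))
  have hi := hR (1 - j)
  have h1 := pat hn hF hB (k := 2 * lbl (2*n) (1-j) - 1) (l := 2 * lbl (2*n) (g (1-j)) - 1)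
    (by omega) (by omega) (by omega) (by omega) (by omega) (by omega) hi
  rw [show 2 * lbl (2*n) (1-j) - 1 + 1 = 2 * lbl (2*n) (1-j) by omega,
    show 2 * lbl (2*n) (g (1-j)) - 1 + 1 = 2 * lbl (2*n) (g (1-j)) by omega] at h1
  have h2 := conn_dref h1
  rw [dref_ext hn (by omega) (by omega), dref_ext hn (by omega) (by omega)] at h2
  have e1 : 2 * lbl (2*n) j - 1 = 4*n + 1 - 2 * lbl (2*n) (1-j) := by
    have hs := lbl_one_sub hn (1 - j)
    rw [sub_sub_cancel] at hs
    omega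
  have e2 : 2 * lbl (2*n) (1 - g (1 - j)) - 1 = 4*n + 1 - 2 * lbl (2*n) (g (1-j)) := by
    have hs := lbl_one_sub hn (g (1 - j))
    omega
  show Conn n true (Tmap n φ) (extEdge n (2 * lbl (2*n) j - 1)) _
  rw [e1, e2]
  exact h2

end FPLRefl

theorem reflection_symmetry' (n : ℕ) (hn : 1 ≤ n) (π : LinkPattern n) :
    PsiP n π.1 = PsiP n (fun i => 1 - π.1 (1 - i)) := by
  classical
  set g2 : ZMod (2*n) → ZMod (2*n) := fun i => 1 - π.1 (1 - i) with hg2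
  have hVV : (fun i => 1 - g2 (1 - i)) = π.1 := by
    funext i
    rw [hg2]
    simp only
    rw [sub_sub_cancel, sub_sub_cancel]
  set S1 := {φ : SqEdge → Bool | IsFpl n φ ∧ BPlus n φ ∧ RealizesP n φ π.1} with hS1
  set S2 := {φ : SqEdge → Bool | IsFpl n φ ∧ BPlus n φ ∧ RealizesP n φ g2} with hS2
  have hfin := FPLRefl.supp_finite n
  have hS1fin : S1.Finite := hfin.subset (fun φ hφ => hφ.1.1)
  have hS2fin : S2.Finite := hfin.subset (fun φ hφ => hφ.1.1)
  have hmap1 : ∀ φ ∈ S1, FPLRefl.Tmap n φ ∈ S2 := by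
    intro φ hφ
    exact FPLRefl.Tmap_mem hn hφ.1 hφ.2.1 hφ.2.2
  have hmap2 : ∀ φ ∈ S2, FPLRefl.Tmap n φ ∈ S1 := by
    intro φ hφ
    have := FPLRefl.Tmap_mem hn hφ.1 hφ.2.1 hφ.2.2
    rw [hVV] at this
    exact this
  have hinj1 : Set.InjOn (FPLRefl.Tmap n) S1 := by
    intro φ1 h1 φ2 h2 heq
    rw [← FPLRefl.Tmap_left_inv h1.1, ← FPLRefl.Tmap_left_inv h2.1, heq]
  have hinj2 : Set.InjOn (FPLRefl.Tmap n) S2 := by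
    intro φ1 h1 φ2 h2 heq
    rw [← FPLRefl.Tmap_left_inv h1.1, ← FPLRefl.Tmap_left_inv h2.1, heq]
  have h12 : S1.ncard ≤ S2.ncard := by
    calc S1.ncard = (FPLRefl.Tmap n '' S1).ncard := (Set.ncard_image_of_injOn hinj1).symm
      _ ≤ S2.ncard := Set.ncard_le_ncard (by rintro _ ⟨φ, hφ, rfl⟩; exact hmap1 φ hφ) hS2fin
  have h21 : S2.ncard ≤ S1.ncard := by
    calc S2.ncard = (FPLRefl.Tmap n '' S2).ncard := (Set.ncard_image_of_injOn hinj2).symm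
      _ ≤ S1.ncard := Set.ncard_le_ncard (by rintro _ ⟨φ, hφ, rfl⟩; exact hmap2 φ hφ) hS1fin
  exact le_antisymm h12 h21


/-- **Reflection symmetry of FPL enumerations**: `Ψ_n(π) = Ψ_n(Vπ)`, where `Vπ` pairs
`2n+1-i` with `2n+1-j` whenever `π` pairs `i` with `j`. -/
theorem reflection_symmetry (n : ℕ) (hn : 1 ≤ n) (π : LinkPattern n) :
    PsiP n π.1 = PsiP n (fun i => 1 - π.1 (1 - i)) :=
  reflection_symmetry' n hn π
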